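/- For the two-spin case n = 2: let W be the 4×4 matrix with all entries 1/4, and suppose M is a 4×4 Hermitian complex matrix whose eigenvalues, with multiplicity, are -1, 0, 0, 1 (i.e., M is unitarily equivalent to F_x = I_x^1 + I_x^2 for two spins) and which has the form M = c·W + D + A with c real, D a real diagonal matrix, and A an antisymmetric matrix with purely imaginary entries. Then |c|/Λ(M) < √(2/3), where Λ(M) = 2 is the difference between the largest and smallest eigenvalue of M; that is, |c| < 2·√(2/3). -/

import Mathlib

open Matrix

set_option maxHeartbeats 2000000 in
/-- Two-spin case: if a Hermitian `4 × 4` matrix `M` has eigenvalues `-1, 0, 0, 1` with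
multiplicity (i.e. is unitarily equivalent to `F_x` for two spins) and has the form
`M = c·W + D + A` with `c` real, `D` a real diagonal matrix, and `A` antisymmetric with
purely imaginary entries, then `|c|/Λ(M) < √(2/3)`, i.e. `|c| < 2√(2/3)` since
`Λ(M) = 2`. -/
theorem two_spin_c_bound (M : Matrix (Fin 4) (Fin 4) ℂ) (hM : M.IsHermitian)
    (hEig : ∃ U ∈ Matrix.unitaryGroup (Fin 4) ℂ,
        M = U * Matrix.diagonal ![(-1 : ℂ), 0, 0, 1] * Uᴴ)
    (c : ℝ) (d : Fin 4 → ℝ) (A : Matrix (Fin 4) (Fin 4) ℂ)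
    (hA : Aᵀ = -A) (hAim : ∀ j k, (A j k).re = 0)
    (hform : M = (c : ℂ) • Matrix.of (fun _ _ : Fin 4 => (1 / 4 : ℂ))
        + Matrix.diagonal (fun j => (d j : ℂ)) + A) :
    |c| < 2 * Real.sqrt (2 / 3) := by
  -- spectral data: trace of M² and determinant
  obtain ⟨U, hU, hMeq⟩ := hEig
  have h1 : Uᴴ * U = 1 := by
    have := Matrix.mem_unitaryGroup_iff'.mp hU
    simpa [Matrix.star_eq_conjTranspose] using this
  set Dm := Matrix.diagonal ![(-1 : ℂ), 0, 0, 1] with hDm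
  have htr2 : (M * M).trace = 2 := by
    have key : (U * Dm * Uᴴ) * (U * Dm * Uᴴ) = U * (Dm * Dm) * Uᴴ := by
      calc (U * Dm * Uᴴ) * (U * Dm * Uᴴ) = U * Dm * (Uᴴ * U) * Dm * Uᴴ := by
            simp only [Matrix.mul_assoc]
        _ = U * (Dm * Dm) * Uᴴ := by rw [h1]; simp only [Matrix.mul_assoc, Matrix.mul_one]
    rw [hMeq, key, Matrix.trace_mul_cycle, ← Matrix.mul_assoc, h1, Matrix.one_mul]
    rw [hDm, Matrix.diagonal_mul_diagonal, Matrix.trace_diagonal]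
    norm_num [Fin.sum_univ_succ]
  have htr3 : (M * (M * M)).trace = 0 := by
    have key : (U * Dm * Uᴴ) * ((U * Dm * Uᴴ) * (U * Dm * Uᴴ)) = U * (Dm * (Dm * Dm)) * Uᴴ := by
      calc (U * Dm * Uᴴ) * ((U * Dm * Uᴴ) * (U * Dm * Uᴴ))
          = U * Dm * (Uᴴ * U) * Dm * (Uᴴ * U) * Dm * Uᴴ := by
            simp only [Matrix.mul_assoc]
        _ = U * (Dm * (Dm * Dm)) * Uᴴ := by
            rw [h1]; simp only [Matrix.mul_assoc, Matrix.mul_one, Matrix.one_mul]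
    rw [hMeq, key, Matrix.trace_mul_cycle, ← Matrix.mul_assoc, h1, Matrix.one_mul]
    rw [hDm, Matrix.diagonal_mul_diagonal, Matrix.diagonal_mul_diagonal, Matrix.trace_diagonal]
    norm_num [Fin.sum_univ_succ]
  have h3 : ∑ i : Fin 4, ∑ j : Fin 4, ∑ k : Fin 4, M i j * (M j k * M k i) = 0 := by
    simpa [Matrix.trace, Matrix.diag, Matrix.mul_apply, Finset.mul_sum] using htr3
  -- entrywise description of M
  set a : Fin 4 → Fin 4 → ℝ := fun j k => (A j k).im with ha
  set e : Fin 4 → ℝ := fun j => c / 4 + d j with he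
  have hAsym : ∀ j k, A k j = -A j k := fun j k => congrFun (congrFun hA j) k
  have hAdiag : ∀ j, A j j = 0 := by
    intro j
    have h := hAsym j j
    linear_combination h / 2
  have hMentry : ∀ j k, M j k =
      if j = k then (e j : ℂ) else ((c / 4 : ℝ) : ℂ) + (a j k : ℝ) * Complex.I := by
    intro j k
    rw [hform]
    by_cases h : j = k
    · subst h
      simp [Matrix.diagonal_apply_eq, hAdiag, he]
      ring
    · simp [Matrix.diagonal_apply_ne _ h, h]
      have : A j k = ((a j k : ℝ) : ℂ) * Complex.I := by
        apply Complex.ext <;> simp [ha, hAim]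
      rw [this]; ring
  have haskew : ∀ j k, a k j = - a j k := by
    intro j k; simp [ha, hAsym j k]
  -- real trace equation
  have htr : ∑ i : Fin 4, ∑ k : Fin 4, M i k * M k i = 2 := by
    simpa [Matrix.trace, Matrix.mul_apply, Matrix.diag] using htr2
  rw [Fin.sum_univ_four] at htr
  simp (config := { decide := true }) only [Fin.sum_univ_four, hMentry] at htr
  norm_num at htr
  have hre := congrArg Complex.re htr
  simp only [Complex.add_re, Complex.mul_re, Complex.mul_im, Complex.ofReal_re,
    Complex.ofReal_im, Complex.I_re, Complex.I_im, Complex.add_im] at hre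
  norm_num at hre
  simp only [haskew 0 1, haskew 0 2, haskew 0 3, haskew 1 2, haskew 1 3, haskew 2 3] at hre
  clear_value a e
  clear htr htr2 htr3 hMeq hform hM hAsym hAdiag hU h1 hA hAim hDm
  -- it suffices to show c² < 8/3
  have hs : (2 * Real.sqrt (2 / 3)) ^ 2 = 8 / 3 := by
    rw [mul_pow, Real.sq_sqrt (by norm_num : (0:ℝ) ≤ 2/3)]; norm_num
  have hgoal : c ^ 2 < 8 / 3 → |c| < 2 * Real.sqrt (2 / 3) := by
    intro h
    nlinarith [abs_nonneg c, sq_abs c, Real.sqrt_nonneg (2 / 3), hs]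
  apply hgoal
  by_contra hcon
  push_neg at hcon
  -- equality case: all squares vanish
  have hz : ∀ x : ℝ, x * x ≤ 0 → x = 0 := fun x hx =>
    mul_self_eq_zero.mp (le_antisymm hx (mul_self_nonneg x))
  have key : e 0 * e 0 + e 1 * e 1 + e 2 * e 2 + e 3 * e 3
      + 2 * (a 0 1 * a 0 1 + a 0 2 * a 0 2 + a 0 3 * a 0 3
        + a 1 2 * a 1 2 + a 1 3 * a 1 3 + a 2 3 * a 2 3) ≤ 0 := by
    nlinarith [hre, hcon]
  have he0 : e 0 = 0 := by
    refine hz _ ?_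
    linarith [key, mul_self_nonneg (e 1), mul_self_nonneg (e 2),
    mul_self_nonneg (e 3), mul_self_nonneg (a 0 1), mul_self_nonneg (a 0 2),
    mul_self_nonneg (a 0 3), mul_self_nonneg (a 1 2), mul_self_nonneg (a 1 3),
    mul_self_nonneg (a 2 3)]
  have he1 : e 1 = 0 := by
    refine hz _ ?_
    linarith [key, mul_self_nonneg (e 0), mul_self_nonneg (e 2),
    mul_self_nonneg (e 3), mul_self_nonneg (a 0 1), mul_self_nonneg (a 0 2),
    mul_self_nonneg (a 0 3), mul_self_nonneg (a 1 2), mul_self_nonneg (a 1 3),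
    mul_self_nonneg (a 2 3)]
  have he2 : e 2 = 0 := by
    refine hz _ ?_
    linarith [key, mul_self_nonneg (e 0), mul_self_nonneg (e 1),
    mul_self_nonneg (e 3), mul_self_nonneg (a 0 1), mul_self_nonneg (a 0 2),
    mul_self_nonneg (a 0 3), mul_self_nonneg (a 1 2), mul_self_nonneg (a 1 3),
    mul_self_nonneg (a 2 3)]
  have he3 : e 3 = 0 := by
    refine hz _ ?_
    linarith [key, mul_self_nonneg (e 0), mul_self_nonneg (e 1),
    mul_self_nonneg (e 2), mul_self_nonneg (a 0 1), mul_self_nonneg (a 0 2),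
    mul_self_nonneg (a 0 3), mul_self_nonneg (a 1 2), mul_self_nonneg (a 1 3),
    mul_self_nonneg (a 2 3)]
  have hsqa : ∀ j k : Fin 4, a j k * a j k ≤ 0 → a j k = 0 := fun j k => hz _
  have ha01 : a 0 1 = 0 := by
    refine hz _ ?_
    linarith [key, mul_self_nonneg (e 0), mul_self_nonneg (e 1),
    mul_self_nonneg (e 2), mul_self_nonneg (e 3), mul_self_nonneg (a 0 2),
    mul_self_nonneg (a 0 3), mul_self_nonneg (a 1 2), mul_self_nonneg (a 1 3),
    mul_self_nonneg (a 2 3)]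
  have ha02 : a 0 2 = 0 := by
    refine hz _ ?_
    linarith [key, mul_self_nonneg (e 0), mul_self_nonneg (e 1),
    mul_self_nonneg (e 2), mul_self_nonneg (e 3), mul_self_nonneg (a 0 1),
    mul_self_nonneg (a 0 3), mul_self_nonneg (a 1 2), mul_self_nonneg (a 1 3),
    mul_self_nonneg (a 2 3)]
  have ha03 : a 0 3 = 0 := by
    refine hz _ ?_
    linarith [key, mul_self_nonneg (e 0), mul_self_nonneg (e 1),
    mul_self_nonneg (e 2), mul_self_nonneg (e 3), mul_self_nonneg (a 0 1),
    mul_self_nonneg (a 0 2), mul_self_nonneg (a 1 2), mul_self_nonneg (a 1 3),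
    mul_self_nonneg (a 2 3)]
  have ha12 : a 1 2 = 0 := by
    refine hz _ ?_
    linarith [key, mul_self_nonneg (e 0), mul_self_nonneg (e 1),
    mul_self_nonneg (e 2), mul_self_nonneg (e 3), mul_self_nonneg (a 0 1),
    mul_self_nonneg (a 0 2), mul_self_nonneg (a 0 3), mul_self_nonneg (a 1 3),
    mul_self_nonneg (a 2 3)]
  have ha13 : a 1 3 = 0 := by
    refine hz _ ?_
    linarith [key, mul_self_nonneg (e 0), mul_self_nonneg (e 1),
    mul_self_nonneg (e 2), mul_self_nonneg (e 3), mul_self_nonneg (a 0 1),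
    mul_self_nonneg (a 0 2), mul_self_nonneg (a 0 3), mul_self_nonneg (a 1 2),
    mul_self_nonneg (a 2 3)]
  have ha23 : a 2 3 = 0 := by
    refine hz _ ?_
    linarith [key, mul_self_nonneg (e 0), mul_self_nonneg (e 1),
    mul_self_nonneg (e 2), mul_self_nonneg (e 3), mul_self_nonneg (a 0 1),
    mul_self_nonneg (a 0 2), mul_self_nonneg (a 0 3), mul_self_nonneg (a 1 2),
    mul_self_nonneg (a 1 3)]
  -- now M is explicit: zero diagonal, c/4 off-diagonal; trace of M³ forces c = 0
  simp only [Fin.sum_univ_four] at h3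
  simp (config := { decide := true }) only [hMentry] at h3
  rw [haskew 0 1, haskew 0 2, haskew 0 3, haskew 1 2, haskew 1 3, haskew 2 3] at h3
  rw [he0, he1, he2, he3, ha01, ha02, ha03, ha12, ha13, ha23] at h3
  norm_num at h3
  have hc3 : ((c ^ 3 * (3 / 8) : ℝ) : ℂ) = 0 := by
    push_cast
    linear_combination h3
  have hc3' : c ^ 3 * (3 / 8) = 0 := by exact_mod_cast hc3
  have hc0 : c = 0 := by
    have : c ^ 3 = 0 := by linarith
    exact pow_eq_zero_iff (by norm_num) |>.mp this
  rw [hc0] at hcon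
  norm_num at hcon
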